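/- Let F : ℝ^d → ℝ^d be continuously differentiable on a neighborhood of a point ω* with F(ω*) = ω*, let u ∈ ℝ^d be a unit vector, Π := I − u·uᵀ the orthogonal projection onto the orthogonal complement of u, let H : ℝ^d → ℝ^d be a symmetric linear map, γ > 0, and suppose the derivative of F at ω* equals Π∘(I − (1/γ)H). Let (ω_k) satisfy ω_{k+1} = F(ω_k) for all k, ω_k ≠ ω* for all k, and ω_k → ω*; set p_k := ω_k − ω*. If (I − (1/γ)H)(p_k/‖p_k‖) converges to some w ∈ ℝ^d with w ∉ span{u}, then Πp_k ≠ 0 for all sufficiently large k and |⟨u, p_k⟩| / ‖Πp_k‖ → 0 as k → ∞. -/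

import Mathlib

open scoped RealInnerProductSpace
open Filter

lemma stmt14_aux {d : ℕ} (u : EuclideanSpace ℝ (Fin d)) (hu : ‖u‖ = 1)
    (p r : ℕ → EuclideanSpace ℝ (Fin d))
    (hp : ∀ k, p k ≠ 0)
    (A : EuclideanSpace ℝ (Fin d) → EuclideanSpace ℝ (Fin d))
    (hAu : ∀ x, ⟪u, A x⟫ = 0)
    (hAsmul : ∀ (c : ℝ) (x), A (c • x) = c • A x)
    (hrec : ∀ k, p (k + 1) = A (p k) + r k)
    (hr : Tendsto (fun k => ‖r k‖ / ‖p k‖) atTop (nhds 0))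
    (Pw : EuclideanSpace ℝ (Fin d)) (hPw : Pw ≠ 0)
    (hAq : Tendsto (fun k => A (‖p k‖⁻¹ • p k)) atTop (nhds Pw)) :
    (∀ᶠ k in atTop, (p k) - ⟪u, p k⟫ • u ≠ 0) ∧
    Tendsto (fun k => |⟪u, p k⟫| / ‖p k - ⟪u, p k⟫ • u‖) atTop (nhds 0) := by
  have hpn : ∀ k, (0:ℝ) < ‖p k‖ := fun k => norm_pos_iff.mpr (hp k)
  set q : ℕ → EuclideanSpace ℝ (Fin d) := fun k => ‖p k‖⁻¹ • p k with hq_def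
  have hq1 : ∀ k, ‖q k‖ = 1 := by
    intro k
    simp [hq_def, norm_smul, abs_of_pos (hpn k), inv_mul_cancel₀ (hpn k).ne']
  have hpq : ∀ k, p k = ‖p k‖ • q k := by
    intro k
    simp [hq_def, smul_smul, mul_inv_cancel₀ (hpn k).ne']
  have hrq : Tendsto (fun k => ‖p k‖⁻¹ • r k) atTop (nhds (0:EuclideanSpace ℝ (Fin d))) := by
    rw [tendsto_zero_iff_norm_tendsto_zero]
    have : ∀ k, ‖‖p k‖⁻¹ • r k‖ = ‖r k‖ / ‖p k‖ := by
      intro k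
      rw [norm_smul, norm_inv, norm_norm, div_eq_inv_mul]
    simpa [this] using hr
  have hplim : Tendsto (fun k => ‖p k‖⁻¹ • p (k + 1)) atTop (nhds Pw) := by
    have heq : ∀ k, ‖p k‖⁻¹ • p (k + 1) = A (q k) + ‖p k‖⁻¹ • r k := by
      intro k
      rw [hrec k, smul_add, ← hAsmul]
    simpa [heq] using hAq.add hrq
  have hc : (0:ℝ) < ‖Pw‖ := norm_pos_iff.mpr hPw
  have hratio : Tendsto (fun k => ‖p (k + 1)‖ / ‖p k‖) atTop (nhds ‖Pw‖) := by
    have := hplim.norm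
    have heq : ∀ k, ‖‖p k‖⁻¹ • p (k + 1)‖ = ‖p (k + 1)‖ / ‖p k‖ := by
      intro k
      rw [norm_smul, norm_inv, norm_norm, div_eq_inv_mul]
    simpa [heq] using this
  have hratioinv : Tendsto (fun k => ‖p k‖ / ‖p (k + 1)‖) atTop (nhds ‖Pw‖⁻¹) := by
    have := hratio.inv₀ hc.ne'
    simpa [inv_div] using this
  -- inner products
  have hip : ∀ k, ⟪u, p (k + 1)⟫ = ⟪u, r k⟫ := by
    intro k
    rw [hrec k, inner_add_right, hAu, zero_add]
  have hqa : ∀ k, ⟪u, q k⟫ = ‖p k‖⁻¹ * ⟪u, p k⟫ := by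
    intro k
    rw [hq_def]
    exact real_inner_smul_right _ _ _
  have hbound : ∀ k, |⟪u, q (k + 1)⟫| ≤ ‖r k‖ / ‖p k‖ * (‖p k‖ / ‖p (k + 1)‖) := by
    intro k
    rw [hqa, hip, abs_mul, abs_inv, abs_norm]
    have h1 : |⟪u, r k⟫| ≤ ‖r k‖ := by
      have := abs_real_inner_le_norm u (r k)
      rwa [hu, one_mul] at this
    have h2 : ‖r k‖ / ‖p k‖ * (‖p k‖ / ‖p (k + 1)‖) = ‖p (k + 1)‖⁻¹ * ‖r k‖ := by
      rw [div_mul_div_comm, mul_comm ‖r k‖ ‖p k‖, mul_div_mul_left _ _ (hpn k).ne',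
        div_eq_inv_mul]
    rw [h2]
    have := mul_le_mul_of_nonneg_left h1 (inv_nonneg.mpr (norm_nonneg (p (k+1))))
    exact this
  have hiq : Tendsto (fun k => |⟪u, q k⟫|) atTop (nhds 0) := by
    rw [← tendsto_add_atTop_iff_nat 1]
    refine squeeze_zero (fun k => abs_nonneg _) hbound ?_
    have := hr.mul hratioinv
    simpa using this
  have ha0 : Tendsto (fun k => ⟪u, q k⟫) atTop (nhds 0) := by
    rw [← abs_zero (α := ℝ)] at hiq
    exact tendsto_zero_iff_abs_tendsto_zero _ |>.mpr (by simpa [Function.comp_def] using hiq)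
  -- norm of projected unit vectors
  have hsq : ∀ k, ‖q k - ⟪u, q k⟫ • u‖ ^ 2 = 1 - ⟪u, q k⟫ ^ 2 := by
    intro k
    have h1 : ⟪q k, ⟪u, q k⟫ • u⟫ = ⟪u, q k⟫ ^ 2 := by
      rw [real_inner_smul_right, real_inner_comm]; ring
    have h2 : ‖⟪u, q k⟫ • u‖ ^ 2 = ⟪u, q k⟫ ^ 2 := by
      rw [norm_smul, hu, mul_one, Real.norm_eq_abs, sq_abs]
    rw [norm_sub_sq_real, h1, h2, hq1]
    ring
  have hnq : Tendsto (fun k => ‖q k - ⟪u, q k⟫ • u‖) atTop (nhds 1) := by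
    have h1 : Tendsto (fun k => 1 - ⟪u, q k⟫ ^ 2) atTop (nhds 1) := by
      have := ha0.pow 2
      simpa using (tendsto_const_nhds (x := (1:ℝ))).sub this
    have h2 : Tendsto (fun k => Real.sqrt (1 - ⟪u, q k⟫ ^ 2)) atTop (nhds 1) := by
      have := (Real.continuous_sqrt.tendsto 1).comp h1
      simpa [Function.comp_def] using this
    refine h2.congr fun k => ?_
    rw [← Real.sqrt_sq (norm_nonneg _), hsq]
  have hev : ∀ᶠ k in atTop, (1:ℝ)/2 < ‖q k - ⟪u, q k⟫ • u‖ :=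
    hnq.eventually (eventually_gt_nhds (by norm_num))
  -- relation between projections of p and q
  have hPp : ∀ k, p k - ⟪u, p k⟫ • u = ‖p k‖ • (q k - ⟪u, q k⟫ • u) := by
    intro k
    conv_lhs => rw [hpq k]
    rw [real_inner_smul_right]
    module
  constructor
  · filter_upwards [hev] with k hk
    rw [hPp k]
    intro h
    rw [smul_eq_zero] at h
    rcases h with h | h
    · exact (hpn k).ne' h
    · rw [h, norm_zero] at hk; linarith
  · have heq : ∀ k, |⟪u, p k⟫| / ‖p k - ⟪u, p k⟫ • u‖ =
        |⟪u, q k⟫| / ‖q k - ⟪u, q k⟫ • u‖ := by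
      intro k
      rw [hPp k, norm_smul, norm_norm]
      have : ⟪u, p k⟫ = ‖p k‖ * ⟪u, q k⟫ := by
        conv_lhs => rw [hpq k]
        exact real_inner_smul_right _ _ _
      rw [this, abs_mul, abs_norm]
      exact mul_div_mul_left _ _ (hpn k).ne'
    simp only [heq]
    have := hiq.div hnq one_ne_zero
    simpa [Pi.div_def] using this

/-- **The errors become asymptotically tangential.** For the fixed-point iteration
`ω_{k+1} = F(ω_k) → ω*` whose Jacobian at `ω*` is `Π∘(I − H/γ)` with
`Π = I − uuᵀ`, if `(I − H/γ)` applied to the unit error directions converges to a limit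
not in `span{u}`, then `Πp_k ≠ 0` eventually and `|⟨u, p_k⟩|/‖Πp_k‖ → 0`, where
`p_k = ω_k − ω*`. -/
theorem stmt_14 {d : ℕ} (γ : ℝ) (hγ : 0 < γ)
    (F : EuclideanSpace ℝ (Fin d) → EuclideanSpace ℝ (Fin d))
    (ωs : EuclideanSpace ℝ (Fin d))
    (hF : ∃ U ∈ nhds ωs, ContDiffOn ℝ 1 F U) (hfix : F ωs = ωs)
    (u : EuclideanSpace ℝ (Fin d)) (hu : ‖u‖ = 1)
    (H : EuclideanSpace ℝ (Fin d) →L[ℝ] EuclideanSpace ℝ (Fin d))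
    (hHsym : ∀ x y, ⟪H x, y⟫ = ⟪x, H y⟫)
    (hJ : ∀ p, fderiv ℝ F ωs p =
      (p - (1 / γ) • H p) - ⟪u, p - (1 / γ) • H p⟫ • u)
    (ω : ℕ → EuclideanSpace ℝ (Fin d))
    (hiter : ∀ k, ω (k + 1) = F (ω k)) (hne : ∀ k, ω k ≠ ωs)
    (hconv : Filter.Tendsto ω Filter.atTop (nhds ωs))
    (w : EuclideanSpace ℝ (Fin d)) (hw : w ∉ Submodule.span ℝ {u})
    (hlim : Filter.Tendsto
      (fun k => ‖ω k - ωs‖⁻¹ • (ω k - ωs) - (1 / γ) • H (‖ω k - ωs‖⁻¹ • (ω k - ωs)))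
      Filter.atTop (nhds w)) :
    (∀ᶠ k in Filter.atTop, (ω k - ωs) - ⟪u, ω k - ωs⟫ • u ≠ 0) ∧
    Filter.Tendsto
      (fun k => |⟪u, ω k - ωs⟫| / ‖(ω k - ωs) - ⟪u, ω k - ωs⟫ • u‖)
      Filter.atTop (nhds 0) := by
  have huu : ⟪u, u⟫ = (1:ℝ) := by
    rw [real_inner_self_eq_norm_sq, hu, one_pow]
  -- derivative
  obtain ⟨U, hU, hFU⟩ := hF
  have hdiff : DifferentiableAt ℝ F ωs := (hFU.contDiffAt hU).differentiableAt one_ne_zero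
  set A' : EuclideanSpace ℝ (Fin d) →L[ℝ] EuclideanSpace ℝ (Fin d) := fderiv ℝ F ωs with hA'
  have hAu : ∀ x, ⟪u, A' x⟫ = 0 := by
    intro x
    rw [hA', hJ]
    rw [inner_sub_right, real_inner_smul_right, huu, mul_one, sub_self]
  have hAsmul : ∀ (c : ℝ) (x), A' (c • x) = c • A' x := fun c x => A'.map_smul c x
  have hp : ∀ k, ω k - ωs ≠ 0 := fun k => sub_ne_zero.mpr (hne k)
  have hrec : ∀ k, ω (k + 1) - ωs =
      A' (ω k - ωs) + (F (ω k) - F ωs - A' (ω k - ωs)) := by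
    intro k
    rw [hiter k, hfix]
    abel
  -- little-o
  have hr : Filter.Tendsto
      (fun k => ‖F (ω k) - F ωs - A' (ω k - ωs)‖ / ‖ω k - ωs‖)
      Filter.atTop (nhds 0) := by
    have ho : (fun h => F (ωs + h) - F ωs - A' h) =o[nhds 0] (fun h => h) :=
      hasFDerivAt_iff_isLittleO_nhds_zero.mp hdiff.hasFDerivAt
    have htend : Filter.Tendsto (fun k => ω k - ωs) Filter.atTop
        (nhds (0 : EuclideanSpace ℝ (Fin d))) := by
      simpa using hconv.sub_const ωs
    have ho2 := ho.comp_tendsto htend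
    have ho3 : (fun k => F (ω k) - F ωs - A' (ω k - ωs)) =o[Filter.atTop]
        (fun k => ω k - ωs) := by
      refine (ho2.congr' ?_ (by rfl)).mono le_rfl
      filter_upwards with k
      simp [Function.comp]
    have := ho3.norm_norm.tendsto_div_nhds_zero
    simpa using this
  -- limit of A' on unit directions
  have hcont : Continuous fun x : EuclideanSpace ℝ (Fin d) => x - ⟪u, x⟫ • u :=
    continuous_id.sub (by fun_prop)
  have hAq : Filter.Tendsto (fun k => A' (‖ω k - ωs‖⁻¹ • (ω k - ωs)))
      Filter.atTop (nhds (w - ⟪u, w⟫ • u)) := by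
    have h1 := (hcont.tendsto w).comp hlim
    refine Filter.Tendsto.congr (fun k => ?_) h1
    simp only [Function.comp]
    rw [hA', hJ]
  have hPw : w - ⟪u, w⟫ • u ≠ 0 := by
    intro h
    exact hw (Submodule.mem_span_singleton.mpr ⟨⟪u, w⟫, (sub_eq_zero.mp h).symm⟩)
  exact stmt14_aux u hu (fun k => ω k - ωs)
    (fun k => F (ω k) - F ωs - A' (ω k - ωs)) hp (fun x => A' x) hAu hAsmul hrec hr
    (w - ⟪u, w⟫ • u) hPw hAq
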